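/- Consider the system dη/dν = 1 − 2ηζ + ζ² + η³ − η²ζ, dζ/dν = 1 − η − 2ηζ + ζ² + η²ζ − ηζ², and let F(η,ζ) = ((1 + (η − ζ)²)/(2ηζ − ζ² − 1))·exp(2·arctan(1/(η − ζ))) on the set G = {(η,ζ) : η ≠ ζ and 2ηζ − ζ² − 1 ≠ 0}. Then F is differentiable on G and (1 − 2ηζ + ζ² + η³ − η²ζ)·∂F/∂η(η,ζ) + (1 − η − 2ηζ + ζ² + η²ζ − ηζ²)·∂F/∂ζ(η,ζ) = 0 for all (η,ζ) ∈ G; that is, F is a general autonomous integral of the system on any domain contained in G. -/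

import Mathlib

/-- `F(η,ζ) = ((1 + (η − ζ)²)/(2ηζ − ζ² − 1))·exp(2·arctan(1/(η − ζ)))`. -/
noncomputable def F12 : ℝ × ℝ → ℝ :=
  fun p => ((1 + (p.1 - p.2) ^ 2) / (2 * p.1 * p.2 - p.2 ^ 2 - 1)) *
    Real.exp (2 * Real.arctan (1 / (p.1 - p.2)))

/-- `F` is a general autonomous integral of the system
`dη/dν = 1 − 2ηζ + ζ² + η³ − η²ζ`,
`dζ/dν = 1 − η − 2ηζ + ζ² + η²ζ − ηζ²` on
`G = {(η,ζ) : η ≠ ζ ∧ 2ηζ − ζ² − 1 ≠ 0}`. -/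
theorem F12_general_autonomous_integral :
    ∀ p : ℝ × ℝ, p.1 ≠ p.2 → 2 * p.1 * p.2 - p.2 ^ 2 - 1 ≠ 0 →
      DifferentiableAt ℝ F12 p ∧
      (1 - 2 * p.1 * p.2 + p.2 ^ 2 + p.1 ^ 3 - p.1 ^ 2 * p.2) *
          fderiv ℝ F12 p (1, 0) +
        (1 - p.1 - 2 * p.1 * p.2 + p.2 ^ 2 + p.1 ^ 2 * p.2 - p.1 * p.2 ^ 2) *
          fderiv ℝ F12 p (0, 1) = 0 := by
  intro p hne hB
  have hu : p.1 - p.2 ≠ 0 := sub_ne_zero.mpr hne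
  have h1 : HasFDerivAt (fun q : ℝ × ℝ => q.1 - q.2)
      (ContinuousLinearMap.fst ℝ ℝ ℝ - ContinuousLinearMap.snd ℝ ℝ ℝ) p :=
    hasFDerivAt_fst.sub hasFDerivAt_snd
  have hinv : HasFDerivAt (fun q : ℝ × ℝ => 1 / (q.1 - q.2))
      (-((((p.1 - p.2) ^ 2)⁻¹) •
        (ContinuousLinearMap.fst ℝ ℝ ℝ - ContinuousLinearMap.snd ℝ ℝ ℝ))) p := by
    simpa [one_div, Function.comp_def] using (hasDerivAt_inv hu).comp_hasFDerivAt p h1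
  have harc := (Real.hasDerivAt_arctan (1 / (p.1 - p.2))).comp_hasFDerivAt p hinv
  have hmul : HasFDerivAt (fun q : ℝ × ℝ => 2 * Real.arctan (1 / (q.1 - q.2)))
      ((2 : ℝ) • ((1 / (1 + (1 / (p.1 - p.2)) ^ 2)) •
        (-((((p.1 - p.2) ^ 2)⁻¹) •
          (ContinuousLinearMap.fst ℝ ℝ ℝ - ContinuousLinearMap.snd ℝ ℝ ℝ))))) p :=
    harc.const_mul (2 : ℝ)
  have hexp : HasFDerivAt (fun q : ℝ × ℝ => Real.exp (2 * Real.arctan (1 / (q.1 - q.2))))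
      (Real.exp (2 * Real.arctan (1 / (p.1 - p.2))) •
        ((2 : ℝ) • ((1 / (1 + (1 / (p.1 - p.2)) ^ 2)) •
          (-((((p.1 - p.2) ^ 2)⁻¹) •
            (ContinuousLinearMap.fst ℝ ℝ ℝ - ContinuousLinearMap.snd ℝ ℝ ℝ)))))) p :=
    by have := (Real.hasDerivAt_exp (2 * Real.arctan (1 / (p.1 - p.2)))).comp_hasFDerivAt p hmul; exact this
  have hA : HasFDerivAt (fun q : ℝ × ℝ => 1 + (q.1 - q.2) ^ 2)
      (((2 : ℕ) * (p.1 - p.2) ^ (2 - 1) : ℝ) •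
        (ContinuousLinearMap.fst ℝ ℝ ℝ - ContinuousLinearMap.snd ℝ ℝ ℝ)) p :=
    by have := ((hasDerivAt_pow 2 (p.1 - p.2)).comp_hasFDerivAt p h1).const_add (1 : ℝ); exact this
  have hfst : HasFDerivAt (fun q : ℝ × ℝ => q.1) (ContinuousLinearMap.fst ℝ ℝ ℝ) p :=
    hasFDerivAt_fst
  have hsnd : HasFDerivAt (fun q : ℝ × ℝ => q.2) (ContinuousLinearMap.snd ℝ ℝ ℝ) p :=
    hasFDerivAt_snd
  have hBd : HasFDerivAt (fun q : ℝ × ℝ => 2 * q.1 * q.2 - q.2 ^ 2 - 1)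
      (((2 * p.1) • ContinuousLinearMap.snd ℝ ℝ ℝ +
          p.2 • ((2 : ℝ) • ContinuousLinearMap.fst ℝ ℝ ℝ)) -
        ((2 : ℕ) * p.2 ^ (2 - 1) : ℝ) • ContinuousLinearMap.snd ℝ ℝ ℝ) p :=
    (((hfst.const_mul (2 : ℝ)).mul hsnd).sub
      ((hasDerivAt_pow 2 p.2).comp_hasFDerivAt p hsnd)).sub_const (1 : ℝ)
  have hBinv : HasFDerivAt (fun q : ℝ × ℝ => (2 * q.1 * q.2 - q.2 ^ 2 - 1)⁻¹)
      ((-((2 * p.1 * p.2 - p.2 ^ 2 - 1) ^ 2)⁻¹ : ℝ) •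
        (((2 * p.1) • ContinuousLinearMap.snd ℝ ℝ ℝ +
          p.2 • ((2 : ℝ) • ContinuousLinearMap.fst ℝ ℝ ℝ)) -
        ((2 : ℕ) * p.2 ^ (2 - 1) : ℝ) • ContinuousLinearMap.snd ℝ ℝ ℝ)) p :=
    (hasDerivAt_inv hB).comp_hasFDerivAt p hBd
  have hAB : HasFDerivAt
      (fun q : ℝ × ℝ => (1 + (q.1 - q.2) ^ 2) * (2 * q.1 * q.2 - q.2 ^ 2 - 1)⁻¹)
      ((1 + (p.1 - p.2) ^ 2) •
        ((-((2 * p.1 * p.2 - p.2 ^ 2 - 1) ^ 2)⁻¹ : ℝ) •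
          (((2 * p.1) • ContinuousLinearMap.snd ℝ ℝ ℝ +
            p.2 • ((2 : ℝ) • ContinuousLinearMap.fst ℝ ℝ ℝ)) -
          ((2 : ℕ) * p.2 ^ (2 - 1) : ℝ) • ContinuousLinearMap.snd ℝ ℝ ℝ)) +
        (2 * p.1 * p.2 - p.2 ^ 2 - 1)⁻¹ •
          (((2 : ℕ) * (p.1 - p.2) ^ (2 - 1) : ℝ) •
            (ContinuousLinearMap.fst ℝ ℝ ℝ - ContinuousLinearMap.snd ℝ ℝ ℝ))) p :=
    hA.mul hBinv
  have hF : HasFDerivAt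
      (fun q : ℝ × ℝ => (1 + (q.1 - q.2) ^ 2) * (2 * q.1 * q.2 - q.2 ^ 2 - 1)⁻¹ *
        Real.exp (2 * Real.arctan (1 / (q.1 - q.2))))
      (((1 + (p.1 - p.2) ^ 2) * (2 * p.1 * p.2 - p.2 ^ 2 - 1)⁻¹) •
        (Real.exp (2 * Real.arctan (1 / (p.1 - p.2))) •
          ((2 : ℝ) • ((1 / (1 + (1 / (p.1 - p.2)) ^ 2)) •
            (-((((p.1 - p.2) ^ 2)⁻¹) •
              (ContinuousLinearMap.fst ℝ ℝ ℝ - ContinuousLinearMap.snd ℝ ℝ ℝ)))))) +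
        Real.exp (2 * Real.arctan (1 / (p.1 - p.2))) •
          ((1 + (p.1 - p.2) ^ 2) •
            ((-((2 * p.1 * p.2 - p.2 ^ 2 - 1) ^ 2)⁻¹ : ℝ) •
              (((2 * p.1) • ContinuousLinearMap.snd ℝ ℝ ℝ +
                p.2 • ((2 : ℝ) • ContinuousLinearMap.fst ℝ ℝ ℝ)) -
              ((2 : ℕ) * p.2 ^ (2 - 1) : ℝ) • ContinuousLinearMap.snd ℝ ℝ ℝ)) +
            (2 * p.1 * p.2 - p.2 ^ 2 - 1)⁻¹ •
              (((2 : ℕ) * (p.1 - p.2) ^ (2 - 1) : ℝ) •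
                (ContinuousLinearMap.fst ℝ ℝ ℝ - ContinuousLinearMap.snd ℝ ℝ ℝ)))) p :=
    hAB.mul hexp
  have hEq : F12 = fun q : ℝ × ℝ =>
      (1 + (q.1 - q.2) ^ 2) * (2 * q.1 * q.2 - q.2 ^ 2 - 1)⁻¹ *
        Real.exp (2 * Real.arctan (1 / (q.1 - q.2))) := by
    funext q; simp [F12, div_eq_mul_inv]
  rw [hEq]
  refine ⟨hF.differentiableAt, ?_⟩
  rw [hF.fderiv]
  have h2 : (1 : ℝ) + (1 / (p.1 - p.2)) ^ 2 ≠ 0 := by positivity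
  have h3 : Real.exp (2 * Real.arctan (1 / (p.1 - p.2))) ≠ 0 := Real.exp_ne_zero _
  simp only [ContinuousLinearMap.smul_apply, ContinuousLinearMap.add_apply,
    ContinuousLinearMap.sub_apply, ContinuousLinearMap.coe_fst',
    ContinuousLinearMap.coe_snd', ContinuousLinearMap.neg_apply, smul_eq_mul,
    ContinuousLinearMap.coe_smul', Pi.smul_apply, Pi.sub_apply]
  field_simp
  ring
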